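/- Let c₁, c₂ > 0 with c₁/c₂ ≤ 3/2 and c₂ < r(x) < c₁ on (x', x''). Then for any x₀ ∈ (x', x''), the modified Halley iterates x_{n+1} = x_n − 2h(x_n)/(2 + r(x₀)h(x_n)²) converge monotonically to x*. -/

import Mathlib

open Set Filter

private lemma halley_alg_ineq' (c₁ c₂ α ρ u : ℝ) (hc₂ : 0 < c₂) (hrat : c₁ ≤ 3 / 2 * c₂)
    (hα : c₂ < α) (hρ₀ : c₂ < ρ) (hρ₁ : ρ < c₁) :
    (1 + ρ * u ^ 2) * (4 - 2 * α * u ^ 2) ≤ (2 + α * u ^ 2) ^ 2 := by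
  have hαp : 0 < α := hc₂.trans hα
  have hρp : 0 < ρ := hc₂.trans hρ₀
  have h1 : 0 ≤ u ^ 2 * (6 * α - 4 * ρ) := mul_nonneg (sq_nonneg u) (by linarith)
  have h2 : 0 ≤ u ^ 2 * u ^ 2 * (α * α + 2 * α * ρ) :=
    mul_nonneg (mul_nonneg (sq_nonneg u) (sq_nonneg u))
      (by nlinarith [mul_pos hαp hρp, mul_pos hαp hαp])
  nlinarith [h1, h2]

theorem modified_halley_global_convergence
    (r f : ℝ → ℝ) (x' x'' xs x₀ c₁ c₂ : ℝ) (x : ℕ → ℝ)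
    (hc₁ : 0 < c₁) (hc₂ : 0 < c₂) (hratio : c₁ / c₂ ≤ 3 / 2)
    (hr : ContDiff ℝ 1 r)
    (hf1 : Differentiable ℝ f) (hf2 : Differentiable ℝ (deriv f))
    (hode : ∀ t ∈ Set.Ioo x' x'', deriv (deriv f) t + r t * f t = 0)
    (hnt : ∃ t ∈ Set.Ioo x' x'', f t ≠ 0)
    (hlt : x' < x'')
    (hz' : deriv f x' = 0) (hz'' : deriv f x'' = 0)
    (hcons : ∀ t ∈ Set.Ioo x' x'', deriv f t ≠ 0)
    (hxs : xs ∈ Set.Ioo x' x'') (hfxs : f xs = 0)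
    (huniq : ∀ t ∈ Set.Ioo x' x'', f t = 0 → t = xs)
    (hrbd : ∀ t ∈ Set.Ioo x' x'', c₂ < r t ∧ r t < c₁)
    (hx0 : x₀ ∈ Set.Ioo x' x'')
    (hseq0 : x 0 = x₀)
    (hseq : ∀ n, x (n + 1) = x n
      - 2 * (f (x n) / deriv f (x n)) / (2 + r x₀ * (f (x n) / deriv f (x n)) ^ 2)) :
    ((x₀ ≤ xs → Monotone x) ∧ (xs ≤ x₀ → Antitone x))
    ∧ Filter.Tendsto x Filter.atTop (nhds xs) := by
  set α := r x₀ with hαdef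
  have hα : c₂ < α := (hrbd x₀ hx0).1
  have hαpos : 0 < α := hc₂.trans hα
  have hrat : c₁ ≤ 3 / 2 * c₂ := by
    rw [div_le_iff₀ hc₂] at hratio; linarith
  set h : ℝ → ℝ := fun t => f t / deriv f t with hhdef
  -- derivative of h
  have hH : ∀ t ∈ Set.Ioo x' x'', HasDerivAt h (1 + r t * h t ^ 2) t := by
    intro t ht
    have hd := hcons t ht
    have H := ((hf1 t).hasDerivAt).div ((hf2 t).hasDerivAt) hd
    have hode' : deriv (deriv f) t = -(r t * f t) := by
      have := hode t ht; linarith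
    rw [hode'] at H
    refine H.congr_deriv ?_
    simp only [hhdef]
    field_simp
    ring
  have hden : ∀ u : ℝ, 0 < 2 + α * u ^ 2 := by
    intro u; nlinarith [sq_nonneg u, hαpos]
  -- h xs = 0
  have hhxs : h xs = 0 := by simp [hhdef, hfxs]
  -- strict monotonicity of h on Ioo
  have hmono : StrictMonoOn h (Set.Ioo x' x'') := by
    apply strictMonoOn_of_deriv_pos (convex_Ioo _ _)
    · exact fun t ht => ((hH t ht).differentiableAt).continuousAt.continuousWithinAt
    · intro t ht
      rw [interior_Ioo] at ht
      rw [(hH t ht).deriv]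
      have := (hrbd t ht).1
      nlinarith [sq_nonneg (h t)]
  -- ψ monotone on Ioo
  set ψ : ℝ → ℝ := fun s => s - xs - 2 * h s / (2 + α * h s ^ 2) with hψdef
  have hψH : ∀ t ∈ Set.Ioo x' x'', HasDerivAt ψ
      (1 - ((1 + r t * h t ^ 2) * (4 - 2 * α * h t ^ 2)) / (2 + α * h t ^ 2) ^ 2) t := by
    intro t ht
    have H := hH t ht
    have hnum : HasDerivAt (fun s => 2 * h s) (2 * (1 + r t * h t ^ 2)) t := H.const_mul 2
    have hdenD : HasDerivAt (fun s => 2 + α * h s ^ 2)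
        (α * (2 * h t ^ 1 * (1 + r t * h t ^ 2))) t := ((H.pow 2).const_mul α).const_add 2
    have hdiv := hnum.div hdenD (ne_of_gt (hden (h t)))
    have hid : HasDerivAt (fun s : ℝ => s - xs) 1 t := (hasDerivAt_id t).sub_const xs
    have := hid.sub hdiv
    refine this.congr_deriv ?_
    have hD := (hden (h t)).ne'
    field_simp
    ring
  have hψmono : MonotoneOn ψ (Set.Ioo x' x'') := by
    apply monotoneOn_of_deriv_nonneg (convex_Ioo _ _)
    · exact fun t ht => ((hψH t ht).differentiableAt).continuousAt.continuousWithinAt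
    · intro t ht
      rw [interior_Ioo] at ht
      exact ((hψH t ht).differentiableAt).differentiableWithinAt
    · intro t ht
      rw [interior_Ioo] at ht
      rw [(hψH t ht).deriv]
      have key := halley_alg_ineq' c₁ c₂ α (r t) (h t) hc₂ hrat hα (hrbd t ht).1 (hrbd t ht).2
      have hD2 : (0:ℝ) < (2 + α * h t ^ 2) ^ 2 := pow_pos (hden (h t)) 2
      rw [sub_nonneg, div_le_one hD2]
      exact key
  have hψxs : ψ xs = 0 := by simp [hψdef, hhxs]
  -- the iteration map and basic step facts
  have hxsmem := hxs
  -- invariant, case xs ≤ x₀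
  have hstep : ∀ n, x (n + 1) = x n - 2 * h (x n) / (2 + α * h (x n) ^ 2) := by
    intro n; rw [hseq n]
  have memIoo : ∀ t, xs ≤ t ∨ t ≤ xs → (min xs x₀ ≤ t ∧ t ≤ max xs x₀) → t ∈ Set.Ioo x' x'' := by
    intro t _ ⟨h1, h2⟩
    constructor
    · calc x' < min xs x₀ := lt_min hxs.1 hx0.1
        _ ≤ t := h1
    · calc t ≤ max xs x₀ := h2
        _ < x'' := max_lt hxs.2 hx0.2
  -- case 1 : xs ≤ x₀
  have case1 : xs ≤ x₀ → (Antitone x ∧ Filter.Tendsto x Filter.atTop (nhds xs)) := by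
    intro hle
    have inv : ∀ n, xs ≤ x n ∧ x n ≤ x₀ := by
      intro n
      induction n with
      | zero => rw [hseq0]; exact ⟨hle, le_refl _⟩
      | succ n ih =>
        obtain ⟨ha, hb⟩ := ih
        have hmem : x n ∈ Set.Ioo x' x'' :=
          ⟨lt_of_lt_of_le hxs.1 ha, lt_of_le_of_lt hb hx0.2⟩
        have hhn : 0 ≤ h (x n) := by
          rcases eq_or_lt_of_le ha with he | hlt'
          · rw [← he, hhxs]
          · have := hmono hxsmem hmem hlt'
            rw [hhxs] at this; exact this.le
        have hψn : 0 ≤ ψ (x n) := by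
          rw [← hψxs]; exact hψmono hxsmem hmem ha
        constructor
        · have : x (n+1) - xs = ψ (x n) := by rw [hstep n, hψdef]; ring
          linarith
        · have hφ : 0 ≤ 2 * h (x n) / (2 + α * h (x n) ^ 2) :=
            div_nonneg (by linarith) (hden _).le
          rw [hstep n]; linarith
    have hdec : ∀ n, x (n + 1) ≤ x n := by
      intro n
      obtain ⟨ha, hb⟩ := inv n
      have hmem : x n ∈ Set.Ioo x' x'' :=
        ⟨lt_of_lt_of_le hxs.1 ha, lt_of_le_of_lt hb hx0.2⟩
      have hhn : 0 ≤ h (x n) := by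
        rcases eq_or_lt_of_le ha with he | hlt'
        · rw [← he, hhxs]
        · have := hmono hxsmem hmem hlt'
          rw [hhxs] at this; exact this.le
      have hφ : 0 ≤ 2 * h (x n) / (2 + α * h (x n) ^ 2) :=
        div_nonneg (by linarith) (hden _).le
      rw [hstep n]; linarith
    have hant : Antitone x := antitone_nat_of_succ_le hdec
    have hbdd : BddBelow (Set.range x) := ⟨xs, by rintro _ ⟨n, rfl⟩; exact (inv n).1⟩
    set L := ⨅ n, x n with hLdef
    have hlim : Filter.Tendsto x Filter.atTop (nhds L) := tendsto_atTop_ciInf hant hbdd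
    have hLlb : xs ≤ L := le_ciInf fun n => (inv n).1
    have hLub : L ≤ x₀ := by
      have := ciInf_le hbdd 0
      rw [hseq0] at this; exact this
    have hLmem : L ∈ Set.Ioo x' x'' :=
      ⟨lt_of_lt_of_le hxs.1 hLlb, lt_of_le_of_lt hLub hx0.2⟩
    -- fixed point identification
    have hcont : ContinuousAt (fun t => t - 2 * h t / (2 + α * h t ^ 2)) L := by
      have hch : ContinuousAt h L :=
        (hf1.continuous.continuousAt).div (hf2.continuous.continuousAt) (hcons L hLmem)
      exact continuousAt_id.sub (((continuousAt_const.mul hch)).div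
        (continuousAt_const.add (continuousAt_const.mul (hch.pow 2))) (ne_of_gt (hden (h L))))
    have hfix : L - 2 * h L / (2 + α * h L ^ 2) = L := by
      have h1 : Filter.Tendsto (fun n => x (n + 1)) Filter.atTop (nhds L) :=
        hlim.comp (tendsto_add_atTop_nat 1)
      have h2 : Filter.Tendsto (fun n => x n - 2 * h (x n) / (2 + α * h (x n) ^ 2))
          Filter.atTop (nhds (L - 2 * h L / (2 + α * h L ^ 2))) := hcont.tendsto.comp hlim
      have h3 : (fun n => x (n + 1)) = fun n => x n - 2 * h (x n) / (2 + α * h (x n) ^ 2) := by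
        funext n; exact hstep n
      rw [h3] at h1
      exact tendsto_nhds_unique h2 h1
    have hhL : h L = 0 := by
      have : 2 * h L / (2 + α * h L ^ 2) = 0 := by linarith
      rw [div_eq_zero_iff] at this
      rcases this with h' | h'
      · linarith
      · exact absurd h' (ne_of_gt (hden (h L)))
    have hfL : f L = 0 := by
      rw [hhdef] at hhL
      simp only [div_eq_zero_iff] at hhL
      rcases hhL with h' | h'
      · exact h'
      · exact absurd h' (hcons L hLmem)
    have : L = xs := huniq L hLmem hfL
    rw [this] at hlim
    exact ⟨hant, hlim⟩
  -- case 2 : x₀ ≤ xs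
  have case2 : x₀ ≤ xs → (Monotone x ∧ Filter.Tendsto x Filter.atTop (nhds xs)) := by
    intro hle
    have inv : ∀ n, x₀ ≤ x n ∧ x n ≤ xs := by
      intro n
      induction n with
      | zero => rw [hseq0]; exact ⟨le_refl _, hle⟩
      | succ n ih =>
        obtain ⟨ha, hb⟩ := ih
        have hmem : x n ∈ Set.Ioo x' x'' :=
          ⟨lt_of_lt_of_le hx0.1 ha, lt_of_le_of_lt hb hxs.2⟩
        have hhn : h (x n) ≤ 0 := by
          rcases eq_or_lt_of_le hb with he | hlt'
          · rw [he, hhxs]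
          · have := hmono hmem hxsmem hlt'
            rw [hhxs] at this; exact this.le
        have hψn : ψ (x n) ≤ 0 := by
          rw [← hψxs]; exact hψmono hmem hxsmem hb
        constructor
        · have hφ : 2 * h (x n) / (2 + α * h (x n) ^ 2) ≤ 0 :=
            div_nonpos_of_nonpos_of_nonneg (by linarith) (hden _).le
          rw [hstep n]; linarith
        · have : x (n+1) - xs = ψ (x n) := by rw [hstep n, hψdef]; ring
          linarith
    have hinc : ∀ n, x n ≤ x (n + 1) := by
      intro n
      obtain ⟨ha, hb⟩ := inv n
      have hmem : x n ∈ Set.Ioo x' x'' :=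
        ⟨lt_of_lt_of_le hx0.1 ha, lt_of_le_of_lt hb hxs.2⟩
      have hhn : h (x n) ≤ 0 := by
        rcases eq_or_lt_of_le hb with he | hlt'
        · rw [he, hhxs]
        · have := hmono hmem hxsmem hlt'
          rw [hhxs] at this; exact this.le
      have hφ : 2 * h (x n) / (2 + α * h (x n) ^ 2) ≤ 0 :=
        div_nonpos_of_nonpos_of_nonneg (by linarith) (hden _).le
      rw [hstep n]; linarith
    have hmon : Monotone x := monotone_nat_of_le_succ hinc
    have hbdd : BddAbove (Set.range x) := ⟨xs, by rintro _ ⟨n, rfl⟩; exact (inv n).2⟩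
    set L := ⨆ n, x n with hLdef
    have hlim : Filter.Tendsto x Filter.atTop (nhds L) := tendsto_atTop_ciSup hmon hbdd
    have hLub : L ≤ xs := ciSup_le fun n => (inv n).2
    have hLlb : x₀ ≤ L := by
      have := le_ciSup hbdd 0
      rw [hseq0] at this; exact this
    have hLmem : L ∈ Set.Ioo x' x'' :=
      ⟨lt_of_lt_of_le hx0.1 hLlb, lt_of_le_of_lt hLub hxs.2⟩
    have hcont : ContinuousAt (fun t => t - 2 * h t / (2 + α * h t ^ 2)) L := by
      have hch : ContinuousAt h L :=
        (hf1.continuous.continuousAt).div (hf2.continuous.continuousAt) (hcons L hLmem)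
      exact continuousAt_id.sub (((continuousAt_const.mul hch)).div
        (continuousAt_const.add (continuousAt_const.mul (hch.pow 2))) (ne_of_gt (hden (h L))))
    have hfix : L - 2 * h L / (2 + α * h L ^ 2) = L := by
      have h1 : Filter.Tendsto (fun n => x (n + 1)) Filter.atTop (nhds L) :=
        hlim.comp (tendsto_add_atTop_nat 1)
      have h2 : Filter.Tendsto (fun n => x n - 2 * h (x n) / (2 + α * h (x n) ^ 2))
          Filter.atTop (nhds (L - 2 * h L / (2 + α * h L ^ 2))) := hcont.tendsto.comp hlim
      have h3 : (fun n => x (n + 1)) = fun n => x n - 2 * h (x n) / (2 + α * h (x n) ^ 2) := by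
        funext n; exact hstep n
      rw [h3] at h1
      exact tendsto_nhds_unique h2 h1
    have hhL : h L = 0 := by
      have : 2 * h L / (2 + α * h L ^ 2) = 0 := by linarith
      rw [div_eq_zero_iff] at this
      rcases this with h' | h'
      · linarith
      · exact absurd h' (ne_of_gt (hden (h L)))
    have hfL : f L = 0 := by
      rw [hhdef] at hhL
      simp only [div_eq_zero_iff] at hhL
      rcases hhL with h' | h'
      · exact h'
      · exact absurd h' (hcons L hLmem)
    have : L = xs := huniq L hLmem hfL
    rw [this] at hlim
    exact ⟨hmon, hlim⟩
  refine ⟨⟨fun hle => (case2 hle).1, fun hle => (case1 hle).1⟩, ?_⟩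
  rcases le_total xs x₀ with hle | hle
  · exact (case1 hle).2
  · exact (case2 hle).2
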